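/- Let g ∈ ℝ^d, H ∈ ℝ^{d×d} symmetric, and M' > 0. If s* is a global minimizer of m(s) = gᵀs + ½ sᵀHs + (M'/6)‖s‖³, then: (i) g + Hs* + (M'/2)‖s*‖s* = 0, (ii) H + (M'/2)‖s*‖·I is positive semidefinite, and (iii) m(s*) ≤ −(M'/12)‖s*‖³. -/

import Mathlib

open RealInnerProductSpace

/-- The cubic-regularized quadratic model `m(s) = gᵀs + ½ sᵀHs + (M'/6)‖s‖³`. -/
noncomputable def cubicModel {d : ℕ} (g : EuclideanSpace ℝ (Fin d))
    (H : Matrix (Fin d) (Fin d) ℝ) (M' : ℝ) (s : EuclideanSpace ℝ (Fin d)) : ℝ :=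
  ⟪g, s⟫ + 1 / 2 * ⟪s, Matrix.toEuclideanLin H s⟫ + M' / 6 * ‖s‖ ^ 3

private theorem expl_deriv (c0 c1 c2 A b c M : ℝ) :
    HasDerivAt (fun t : ℝ => c0 + c1 * t + c2 * t ^ 2 + M * ((A + b * t + c * t ^ 2) ^ ((3:ℝ)/2)))
      (c1 + M * ((3/2) * A ^ ((1:ℝ)/2) * b)) 0 := by
  have hf : HasDerivAt (fun t : ℝ => A + b * t + c * t ^ 2) b 0 := by
    have h1 : HasDerivAt (fun t : ℝ => A + b * t + c * t ^ 2) (0 + b * 1 + c * (2 * 0 ^ 1)) 0 :=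
      ((hasDerivAt_const 0 A).add ((hasDerivAt_id 0).const_mul b)).add
        ((hasDerivAt_pow 2 0).const_mul c)
    simpa using h1
  have hg : HasDerivAt (fun u : ℝ => u ^ ((3:ℝ)/2))
      ((3:ℝ)/2 * (A + b * 0 + c * 0 ^ 2) ^ ((3:ℝ)/2 - 1)) (A + b * 0 + c * 0 ^ 2) :=
    Real.hasDerivAt_rpow_const (Or.inr (by norm_num))
  have hcomp := (hg.comp 0 hf).const_mul M
  have hpoly : HasDerivAt (fun t : ℝ => c0 + c1 * t + c2 * t ^ 2) c1 0 := by
    have h1 : HasDerivAt (fun t : ℝ => c0 + c1 * t + c2 * t ^ 2) (0 + c1 * 1 + c2 * (2 * 0 ^ 1)) 0 :=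
      ((hasDerivAt_const 0 c0).add ((hasDerivAt_id 0).const_mul c1)).add
        ((hasDerivAt_pow 2 0).const_mul c2)
    simpa using h1
  have hsum := hpoly.add hcomp
  have heq : (3:ℝ)/2 - 1 = (1:ℝ)/2 := by norm_num
  simp only [mul_zero, zero_pow, add_zero, Function.comp_def, heq] at hsum ⊢
  convert hsum using 1
  · rfl
  · rfl
  · rfl
  · simp

private theorem sq_rpow_three_halves (a : ℝ) (ha : 0 ≤ a) : (a ^ 2) ^ ((3:ℝ)/2) = a ^ 3 := by
  rw [← Real.rpow_natCast a 2, ← Real.rpow_mul ha, ← Real.rpow_natCast a 3]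
  norm_num

private theorem sq_rpow_half (a : ℝ) (ha : 0 ≤ a) : (a ^ 2) ^ ((1:ℝ)/2) = a := by
  rw [← Real.rpow_natCast a 2, ← Real.rpow_mul ha]
  norm_num

set_option maxHeartbeats 1000000 in
theorem cubic_model_optimality (d : ℕ) (g : EuclideanSpace ℝ (Fin d))
    (H : Matrix (Fin d) (Fin d) ℝ) (hH : H.IsSymm) (M' : ℝ) (hM' : 0 < M')
    (sstar : EuclideanSpace ℝ (Fin d))
    (hmin : ∀ s, cubicModel g H M' sstar ≤ cubicModel g H M' s) :
    g + Matrix.toEuclideanLin H sstar + (M' / 2 * ‖sstar‖) • sstar = 0 ∧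
      (∀ v : EuclideanSpace ℝ (Fin d),
        0 ≤ ⟪v, Matrix.toEuclideanLin H v⟫ + M' / 2 * ‖sstar‖ * ‖v‖ ^ 2) ∧
      cubicModel g H M' sstar ≤ -(M' / 12) * ‖sstar‖ ^ 3 := by
  set T := Matrix.toEuclideanLin H with hT
  set x := sstar with hx
  -- symmetry
  have hsymm : ∀ a b : EuclideanSpace ℝ (Fin d), ⟪T a, b⟫ = ⟪a, T b⟫ := by
    have : H.IsHermitian := hH
    exact fun a b => (Matrix.isHermitian_iff_isSymmetric.mp this) a b
  have hinner_comm : ∀ a b : EuclideanSpace ℝ (Fin d), ⟪a, T b⟫ = ⟪b, T a⟫ := by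
    intro a b
    rw [real_inner_comm (T b) a, hsymm b a]
  -- norm cube expansion along a line
  have hnormcube : ∀ (y v : EuclideanSpace ℝ (Fin d)) (t : ℝ),
      ‖y + t • v‖ ^ 3 = (‖y‖ ^ 2 + (2 * ⟪y, v⟫) * t + ‖v‖ ^ 2 * t ^ 2) ^ ((3:ℝ)/2) := by
    intro y v t
    have hsq : ‖y + t • v‖ ^ 2 = ‖y‖ ^ 2 + (2 * ⟪y, v⟫) * t + ‖v‖ ^ 2 * t ^ 2 := by
      rw [@norm_add_sq_real, real_inner_smul_right, norm_smul]
      simp only [Real.norm_eq_abs, mul_pow, sq_abs]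
      ring
    rw [← hsq, sq_rpow_three_halves _ (norm_nonneg _)]
  -- model expansion along a line
  have hline : ∀ (v : EuclideanSpace ℝ (Fin d)) (t : ℝ),
      cubicModel g H M' (x + t • v) =
        (⟪g, x⟫ + 1/2 * ⟪x, T x⟫) + (⟪g, v⟫ + ⟪v, T x⟫) * t + (1/2 * ⟪v, T v⟫) * t ^ 2 +
          (M'/6) * ((‖x‖ ^ 2 + (2 * ⟪x, v⟫) * t + ‖v‖ ^ 2 * t ^ 2) ^ ((3:ℝ)/2)) := by
    intro v t
    rw [cubicModel, ← hnormcube, ← hT]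
    have e1 : ⟪g, x + t • v⟫ = ⟪g, x⟫ + t * ⟪g, v⟫ := by
      rw [inner_add_right, real_inner_smul_right]
    have e2 : ⟪x + t • v, T (x + t • v)⟫
        = ⟪x, T x⟫ + 2 * t * ⟪v, T x⟫ + t ^ 2 * ⟪v, T v⟫ := by
      rw [map_add, map_smul, inner_add_left, inner_add_right, inner_add_right]
      simp only [real_inner_smul_left, real_inner_smul_right]
      rw [hinner_comm x v]
      ring
    rw [e1, e2]
    ring
  -- derivative of the model along a line at 0
  have hderiv : ∀ v : EuclideanSpace ℝ (Fin d),
      HasDerivAt (fun t : ℝ => cubicModel g H M' (x + t • v))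
        ((⟪g, v⟫ + ⟪v, T x⟫) + (M'/6) * ((3/2) * ‖x‖ * (2 * ⟪x, v⟫))) 0 := by
    intro v
    have h0 := expl_deriv (⟪g, x⟫ + 1/2 * ⟪x, T x⟫) (⟪g, v⟫ + ⟪v, T x⟫) (1/2 * ⟪v, T v⟫)
      (‖x‖ ^ 2) (2 * ⟪x, v⟫) (‖v‖ ^ 2) (M'/6)
    rw [sq_rpow_half _ (norm_nonneg x)] at h0
    have heqf : (fun t : ℝ => cubicModel g H M' (x + t • v)) =
        (fun t : ℝ => (⟪g, x⟫ + 1/2 * ⟪x, T x⟫) + (⟪g, v⟫ + ⟪v, T x⟫) * t +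
          (1/2 * ⟪v, T v⟫) * t ^ 2 +
          (M'/6) * ((‖x‖ ^ 2 + (2 * ⟪x, v⟫) * t + ‖v‖ ^ 2 * t ^ 2) ^ ((3:ℝ)/2))) := by
      funext t; exact hline v t
    rw [heqf]
    exact h0
  -- first-order condition, scalar form
  have hfoc : ∀ v : EuclideanSpace ℝ (Fin d),
      ⟪g, v⟫ + ⟪v, T x⟫ + M'/2 * ‖x‖ * ⟪x, v⟫ = 0 := by
    intro v
    have hloc : IsLocalMin (fun t : ℝ => cubicModel g H M' (x + t • v)) 0 := by
      apply Filter.Eventually.of_forall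
      intro t
      simpa using hmin (x + t • v)
    have hz := hloc.hasDerivAt_eq_zero (hderiv v)
    linarith [hz]
  -- first-order condition, vector form
  have hi : g + T x + (M' / 2 * ‖x‖) • x = 0 := by
    set w := g + T x + (M' / 2 * ‖x‖) • x with hw
    have hwv : ∀ v, ⟪w, v⟫ = 0 := by
      intro v
      rw [hw, inner_add_left, inner_add_left, real_inner_smul_left, real_inner_comm v (T x)]
      exact hfoc v
    have := hwv w
    rwa [inner_self_eq_zero] at this
  -- key inequality on the sphere
  have hsphere : ∀ w : EuclideanSpace ℝ (Fin d), ‖x + w‖ = ‖x‖ →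
      0 ≤ ⟪w, T w⟫ + M'/2 * ‖x‖ * ‖w‖ ^ 2 := by
    intro w hnw
    have h1 := hmin (x + w)
    have e2 : ⟪x + w, T (x + w)⟫ = ⟪x, T x⟫ + 2 * ⟪w, T x⟫ + ⟪w, T w⟫ := by
      rw [map_add, inner_add_left, inner_add_right, inner_add_right, hinner_comm x w]
      ring
    have e1 : ⟪g, x + w⟫ = ⟪g, x⟫ + ⟪g, w⟫ := inner_add_right g x w
    have hfocw := hfoc w
    have hinner : ⟪x, w⟫ = -(‖w‖ ^ 2) / 2 := by
      have h2 : ‖x + w‖ ^ 2 = ‖x‖ ^ 2 := by rw [hnw]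
      rw [@norm_add_sq_real] at h2
      linarith
    rw [cubicModel, cubicModel, ← hT, e1, e2, hnw] at h1
    rw [hinner] at hfocw
    linarith [h1, hfocw]
  -- second-order condition, case ⟪x, v⟫ ≠ 0
  have hcase1 : ∀ v : EuclideanSpace ℝ (Fin d), ⟪x, v⟫ ≠ 0 →
      0 ≤ ⟪v, T v⟫ + M'/2 * ‖x‖ * ‖v‖ ^ 2 := by
    intro v hxv
    have hv : v ≠ 0 := by
      rintro rfl; simp at hxv
    have hnv : (0:ℝ) < ‖v‖ ^ 2 := pow_pos (norm_pos_iff.mpr hv) 2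
    set α : ℝ := -2 * ⟪x, v⟫ / ‖v‖ ^ 2 with hα
    have hαv : α * ‖v‖ ^ 2 = -2 * ⟪x, v⟫ := by
      rw [hα]; field_simp
    have hα0 : α ≠ 0 := by
      rw [hα]
      apply div_ne_zero _ (ne_of_gt hnv)
      intro h
      exact hxv (by linarith)
    have hsph : ‖x + α • v‖ = ‖x‖ := by
      have hs2 : ‖x + α • v‖ ^ 2 = ‖x‖ ^ 2 := by
        rw [@norm_add_sq_real, real_inner_smul_right, norm_smul]
        simp only [Real.norm_eq_abs, mul_pow, sq_abs]
        linear_combination α * hαv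
      have h3 := congrArg Real.sqrt hs2
      rwa [Real.sqrt_sq (norm_nonneg _), Real.sqrt_sq (norm_nonneg _)] at h3
    have h2 := hsphere (α • v) hsph
    rw [map_smul, real_inner_smul_left, real_inner_smul_right, norm_smul] at h2
    simp only [Real.norm_eq_abs, mul_pow, sq_abs] at h2
    have hα2 : (0:ℝ) < α ^ 2 := by positivity
    nlinarith [h2, hα2]
  -- second-order condition, general
  have hii : ∀ v : EuclideanSpace ℝ (Fin d),
      0 ≤ ⟪v, T v⟫ + M' / 2 * ‖x‖ * ‖v‖ ^ 2 := by
    intro v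
    by_cases hxv : ⟪x, v⟫ ≠ 0
    · exact hcase1 v hxv
    push_neg at hxv
    by_cases hx0 : x = 0
    · -- x = 0 : g = 0, use positivity of the model on a ray
      by_cases hv0 : v = 0
      · simp [hv0]
      have hg0 : g = 0 := by
        have h4 := hi
        rw [hx0] at h4
        simpa using h4
      have hnv : (0:ℝ) < ‖v‖ := norm_pos_iff.mpr hv0
      rw [hx0]
      simp only [norm_zero, mul_zero, zero_mul, add_zero]
      by_contra hneg
      push_neg at hneg
      set t : ℝ := -3 * ⟪v, T v⟫ / (2 * M' * ‖v‖ ^ 3) with ht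
      have hQ : ⟪v, T v⟫ < 0 := by linarith
      have htpos : 0 < t := by
        rw [ht]
        apply div_pos (by linarith) (by positivity)
      have h1 := hmin (t • v)
      rw [hx0] at h1
      have hm0 : cubicModel g H M' 0 = 0 := by
        simp [cubicModel, hg0]
      rw [hm0, cubicModel, ← hT, hg0] at h1
      simp only [map_smul, real_inner_smul_left, real_inner_smul_right, inner_zero_left,
        norm_smul, Real.norm_eq_abs, mul_pow, abs_of_pos htpos] at h1
      have hkey : t * (2 * M' * ‖v‖ ^ 3) = -3 * ⟪v, T v⟫ := by
        rw [ht]; field_simp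
      have hsub : M'/6 * (t ^ 3 * ‖v‖ ^ 3) = -(t ^ 2 * ⟪v, T v⟫) / 4 := by
        linear_combination (t^2/12) * hkey
      rw [hsub] at h1
      nlinarith [h1, mul_pos htpos htpos, hQ]
    · -- x ≠ 0, ⟪x,v⟫ = 0 : perturbation argument
      have hnx : (0:ℝ) < ‖x‖ := norm_pos_iff.mpr hx0
      have hxx : ⟪x, x⟫ ≠ 0 := by
        rw [real_inner_self_eq_norm_sq]
        positivity
      have hC : 0 ≤ ⟪x, T x⟫ + M'/2 * ‖x‖ * ‖x‖ ^ 2 := hcase1 x hxx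
      have hexp : ∀ ε : ℝ, ε ≠ 0 →
          0 ≤ (⟪v, T v⟫ + M'/2 * ‖x‖ * ‖v‖ ^ 2) + 2 * ε * ⟪v, T x⟫ +
            ε ^ 2 * (⟪x, T x⟫ + M'/2 * ‖x‖ * ‖x‖ ^ 2) := by
        intro ε hε
        have hxu : ⟪x, v + ε • x⟫ ≠ 0 := by
          rw [inner_add_right, real_inner_smul_right, hxv, real_inner_self_eq_norm_sq, zero_add]
          intro h
          rcases mul_eq_zero.mp h with h' | h'
          · exact hε h'
          · exact absurd h' (by positivity)
        have h2 := hcase1 (v + ε • x) hxu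
        have e2 : ⟪v + ε • x, T (v + ε • x)⟫
            = ⟪v, T v⟫ + 2 * ε * ⟪v, T x⟫ + ε ^ 2 * ⟪x, T x⟫ := by
          rw [map_add, map_smul, inner_add_left, inner_add_right, inner_add_right]
          simp only [real_inner_smul_left, real_inner_smul_right]
          rw [hinner_comm x v]
          ring
        have hvx : ⟪v, x⟫ = 0 := (real_inner_comm x v).trans hxv
        have e3 : ‖v + ε • x‖ ^ 2 = ‖v‖ ^ 2 + ε ^ 2 * ‖x‖ ^ 2 := by
          rw [@norm_add_sq_real, real_inner_smul_right, hvx, norm_smul]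
          simp [Real.norm_eq_abs, mul_pow, sq_abs]
        rw [e2, e3] at h2
        linarith [h2]
      have hfin : ∀ ε : ℝ, 0 < ε →
          0 ≤ (⟪v, T v⟫ + M'/2 * ‖x‖ * ‖v‖ ^ 2) +
            ε ^ 2 * (⟪x, T x⟫ + M'/2 * ‖x‖ * ‖x‖ ^ 2) := by
        intro ε hε
        have h1 := hexp ε (ne_of_gt hε)
        have h2 := hexp (-ε) (by intro h; exact (ne_of_gt hε) (by linarith))
        nlinarith [h1, h2]
      by_contra hneg
      push_neg at hneg
      set Qv : ℝ := ⟪v, T v⟫ + M'/2 * ‖x‖ * ‖v‖ ^ 2 with hQdef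
      set C : ℝ := ⟪x, T x⟫ + M'/2 * ‖x‖ * ‖x‖ ^ 2 with hCdef
      have hQvneg : Qv < 0 := hneg
      have hC1 : (0:ℝ) < C + 1 := by linarith
      set ε : ℝ := Real.sqrt (-Qv / (2 * (C + 1))) with hε
      have harg : 0 < -Qv / (2 * (C + 1)) := div_pos (by linarith) (by linarith)
      have hεpos : 0 < ε := Real.sqrt_pos.mpr harg
      have hε2 : ε ^ 2 = -Qv / (2 * (C + 1)) := Real.sq_sqrt (le_of_lt harg)
      have hQε : -Qv = ε ^ 2 * (2 * (C + 1)) := by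
        rw [hε2]; field_simp
      have h5 := hfin ε hεpos
      nlinarith [h5, hQε, hC, mul_pos hεpos hεpos]
  refine ⟨hi, hii, ?_⟩
  -- value bound
  have hfx := hfoc x
  have hiix := hii x
  rw [cubicModel, ← hT]
  rw [real_inner_self_eq_norm_sq] at hfx
  nlinarith [hfx, hiix, norm_nonneg x]
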